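/- Let Q and Q̃ be (n+1)×(n+1) real matrices written in block form Q = [[-1/2, qᵀ], [-q, Q̄]] and Q̃ = [[-1/2 - σ, qᵀ], [-q, Q̄]], where q is an n×1 vector, Q̄ is an invertible n×n matrix, and σ ≠ 0. Assume Q·𝟙 = 0 where 𝟙 is the all-ones vector of length n+1. Then Q̃ is invertible with inverse Q̃⁻¹ = G − (1/σ)·𝟙·bᵀ, where G = [[0, 0], [0, Q̄⁻¹]] and bᵀ = [1, −qᵀQ̄⁻¹]. -/
import Mathlib


open Matrix

/-- Inverse of the SBP-SAT first-derivative matrix `Q̃`. -/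
theorem stmt0 (n : ℕ) (q : Fin n → ℝ) (Qb : Matrix (Fin n) (Fin n) ℝ)
    (hQb : IsUnit Qb.det) (σ : ℝ) (hσ : σ ≠ 0)
    (Q : Matrix (Fin 1 ⊕ Fin n) (Fin 1 ⊕ Fin n) ℝ)
    (hQ : Q = Matrix.fromBlocks (Matrix.of fun _ _ => (-(1/2) : ℝ))
        (Matrix.of fun _ j => q j) (Matrix.of fun i _ => -q i) Qb)
    (hQ1 : Q *ᵥ (fun _ => 1) = 0)
    (Qt : Matrix (Fin 1 ⊕ Fin n) (Fin 1 ⊕ Fin n) ℝ)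
    (hQt : Qt = Matrix.fromBlocks (Matrix.of fun _ _ => (-(1/2) - σ : ℝ))
        (Matrix.of fun _ j => q j) (Matrix.of fun i _ => -q i) Qb)
    (G : Matrix (Fin 1 ⊕ Fin n) (Fin 1 ⊕ Fin n) ℝ)
    (hG : G = Matrix.fromBlocks 0 0 0 Qb⁻¹)
    (b : (Fin 1 ⊕ Fin n) → ℝ)
    (hb : b = Sum.elim (fun _ => (1 : ℝ)) (fun j => -(Qb⁻¹.vecMul q) j)) :
    IsUnit Qt.det ∧ Qt⁻¹ = G - (1/σ) • Matrix.of (fun _ j => b j) := by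
  have hQbinv : Qb * Qb⁻¹ = 1 := Matrix.mul_nonsing_inv _ hQb
  -- extract row-sum facts from hQ1
  have hsum : ∑ j, q j = 1/2 := by
    have h := congrFun hQ1 (Sum.inl 0)
    simp [hQ, Matrix.mulVec, dotProduct, Fintype.sum_sum_type] at h
    linarith
  have hrow : ∀ i, ∑ j, Qb i j = q i := by
    intro i
    have h := congrFun hQ1 (Sum.inr i)
    simp [hQ, Matrix.mulVec, dotProduct, Fintype.sum_sum_type] at h
    linarith
  set c : Fin n → ℝ := Qb⁻¹.vecMul q with hc
  have hcdef : ∀ j, ∑ k, q k * Qb⁻¹ k j = c j := by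
    intro j; simp [hc, Matrix.vecMul, dotProduct]
  have key : Qt * (G - (1/σ) • Matrix.of (fun _ j => b j)) = 1 := by
    ext x y
    rw [Matrix.mul_apply]
    cases x with
    | inl x =>
      cases y with
      | inl y =>
        simp [hQt, hG, hb, Fintype.sum_sum_type, Matrix.sub_apply,
          Matrix.one_apply, mul_comm, sub_mul, Finset.sum_sub_distrib,
          ← Finset.sum_mul, hsum]
        rw [if_pos (Subsingleton.elim x y)]
        field_simp
        ring
      | inr y =>
        simp [hQt, hG, hb, Fintype.sum_sum_type, Matrix.sub_apply,
          Matrix.one_apply, sub_mul, mul_sub, Finset.sum_sub_distrib,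
          Finset.sum_add_distrib, ← Finset.sum_mul]
        rw [Finset.sum_congr rfl (fun k _ => by ring :
          ∀ k ∈ Finset.univ, q k * (Qb⁻¹ k y + σ⁻¹ * c y) = q k * Qb⁻¹ k y + q k * (σ⁻¹ * c y))]
        rw [Finset.sum_add_distrib, hcdef, ← Finset.sum_mul, hsum]
        field_simp
        ring
    | inr x =>
      cases y with
      | inl y =>
        simp [hQt, hG, hb, Fintype.sum_sum_type, Matrix.sub_apply,
          Matrix.one_apply, mul_sub, Finset.sum_sub_distrib, ← Finset.sum_mul, hrow]
      | inr y =>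
        have hmul := congrFun (congrFun hQbinv x) y
        rw [Matrix.mul_apply] at hmul
        simp [hQt, hG, hb, Fintype.sum_sum_type, Matrix.sub_apply,
          Matrix.one_apply, mul_sub, Finset.sum_sub_distrib]
        rw [Finset.sum_congr rfl (fun k _ => by ring :
          ∀ k ∈ Finset.univ, Qb x k * (Qb⁻¹ k y + σ⁻¹ * c y) = Qb x k * Qb⁻¹ k y + Qb x k * (σ⁻¹ * c y))]
        rw [Finset.sum_add_distrib, hmul, ← Finset.sum_mul, hrow,
          show ∀ A B : ℝ, -A + (B + A) = B from fun A B => by ring,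
          Matrix.one_apply]
  have hu : IsUnit Qt.det := Matrix.isUnit_det_of_right_inverse key
  exact ⟨hu, Matrix.inv_eq_right_inv key⟩
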